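/- Fix i ∈ {1,2,3} and let k_0 = K([i]) = i, s_0 = S([i]), t_0 = T([i]) be the last-index/swap/third labels of the one-step sequence [i]. For the sequences [i]S^n on the trunk (applying the S-move n times), the tropical signs are ε_{k_0}^{[i]S^n} = (−1)^{n+1}, ε_{s_0}^{[i]S^n} = (−1)^n, ε_{t_0}^{[i]S^n} = 1, and (K([i]S^n), S([i]S^n)) = (k_0, s_0) if n is even, (s_0, k_0) if n is odd, while T([i]S^n) = t_0. -/

import Mathlib

open Matrix

noncomputable section

abbrev Mat3 := Matrix (Fin 3) (Fin 3) ℝ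

def pPart {n : ℕ} (A : Matrix (Fin n) (Fin n) ℝ) : Matrix (Fin n) (Fin n) ℝ :=
  Matrix.of fun i j => max (A i j) 0

def Jmat {n : ℕ} (k : Fin n) : Matrix (Fin n) (Fin n) ℝ :=
  Matrix.diagonal fun i => if i = k then -1 else 1

/-- `A^{•k}`: keep only column `k`. -/
def colSel {n : ℕ} (k : Fin n) (A : Matrix (Fin n) (Fin n) ℝ) : Matrix (Fin n) (Fin n) ℝ :=
  Matrix.of fun i j => if j = k then A i j else 0

/-- `A^{k•}`: keep only row `k`. -/
def rowSel {n : ℕ} (k : Fin n) (A : Matrix (Fin n) (Fin n) ℝ) : Matrix (Fin n) (Fin n) ℝ :=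
  Matrix.of fun i j => if i = k then A i j else 0

/-- Matrix mutation in direction `k`. -/
def mutB {n : ℕ} (k : Fin n) (B : Matrix (Fin n) (Fin n) ℝ) : Matrix (Fin n) (Fin n) ℝ :=
  (Jmat k + colSel k (pPart (-B))) * B * (Jmat k + rowSel k (pPart B))

/-- One step of the simultaneous `(B, C, G)` recursion, mutating at direction `k`. -/
def CGstep {n : ℕ} (B0 : Matrix (Fin n) (Fin n) ℝ)
    (p : Matrix (Fin n) (Fin n) ℝ × Matrix (Fin n) (Fin n) ℝ × Matrix (Fin n) (Fin n) ℝ)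
    (k : Fin n) :
    Matrix (Fin n) (Fin n) ℝ × Matrix (Fin n) (Fin n) ℝ × Matrix (Fin n) (Fin n) ℝ :=
  (mutB k p.1,
   p.2.1 * Jmat k + p.2.1 * rowSel k (pPart p.1) + colSel k (pPart (-p.2.1)) * p.1,
   p.2.2 * Jmat k + p.2.2 * colSel k (pPart (-p.1)) - B0 * colSel k (pPart (-p.2.1)))

def CGmat {n : ℕ} (B : Matrix (Fin n) (Fin n) ℝ) (w : List (Fin n)) :
    Matrix (Fin n) (Fin n) ℝ × Matrix (Fin n) (Fin n) ℝ × Matrix (Fin n) (Fin n) ℝ :=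
  w.foldl (CGstep B) (B, 1, 1)

/-- The exchange matrix `B^w`. -/
def Bmat {n : ℕ} (B : Matrix (Fin n) (Fin n) ℝ) (w : List (Fin n)) : Matrix (Fin n) (Fin n) ℝ :=
  (CGmat B w).1

/-- The `C`-matrix `C^w`. -/
def Cmat {n : ℕ} (B : Matrix (Fin n) (Fin n) ℝ) (w : List (Fin n)) : Matrix (Fin n) (Fin n) ℝ :=
  (CGmat B w).2.1

/-- The `G`-matrix `G^w`. -/
def Gmat {n : ℕ} (B : Matrix (Fin n) (Fin n) ℝ) (w : List (Fin n)) : Matrix (Fin n) (Fin n) ℝ :=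
  (CGmat B w).2.2

/-- A sequence is reduced if consecutive entries differ. -/
def ReducedSeq {n : ℕ} (w : List (Fin n)) : Prop := w.Chain' (· ≠ ·)

def SkewSymmetrizable {n : ℕ} (B : Matrix (Fin n) (Fin n) ℝ) : Prop :=
  ∃ d : Fin n → ℝ, (∀ i, 0 < d i) ∧ (Matrix.diagonal d * B)ᵀ = -(Matrix.diagonal d * B)

def cyclicPattern : Mat3 := !![0,-1,1; 1,0,-1; -1,1,0]

/-- A rank-3 exchange matrix is cyclic if its sign pattern is `± cyclicPattern`. -/
def IsCyclic3 (B : Mat3) : Prop :=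
  (∀ i j, Real.sign (B i j) = cyclicPattern i j) ∨
  (∀ i j, Real.sign (B i j) = - cyclicPattern i j)

/-- `B` is cluster-cyclic if every iterated mutation along a reduced sequence is cyclic. -/
def ClusterCyclic (B : Mat3) : Prop :=
  ∀ w : List (Fin 3), ReducedSeq w → IsCyclic3 (Bmat B w)

/-- `ε` is a family of tropical signs for the (sign-coherent) `C`-pattern of `B`. -/
def IsTropSigns (B : Mat3) (ε : List (Fin 3) → Fin 3 → ℝ) : Prop :=
  ∀ w : List (Fin 3), ReducedSeq w → ∀ i : Fin 3,
    (ε w i = 1 ∨ ε w i = -1) ∧ ∀ j, 0 ≤ ε w i * Cmat B w j i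


section TrunkHelpers

lemma fin3cases (a : Fin 3) : a = 0 ∨ a = 1 ∨ a = 2 := by omega

lemma fin3_third {k s t x : Fin 3} (hks : k ≠ s) (hkt : k ≠ t) (hst : s ≠ t)
    (h1 : x ≠ s) (h2 : x ≠ k) : x = t := by omega

lemma sign_neg_one {x : ℝ} (h : Real.sign x = -1) : x < 0 := by
  rcases lt_trichotomy x 0 with h'|h'|h' <;>
    simp only [Real.sign_of_pos, Real.sign_of_neg, h', Real.sign_zero] at h ⊢ <;> norm_num at h

lemma sign_pos_one {x : ℝ} (h : Real.sign x = 1) : 0 < x := by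
  rcases lt_trichotomy x 0 with h'|h'|h' <;>
    simp only [Real.sign_of_pos, Real.sign_of_neg, h', Real.sign_zero] at h ⊢ <;> norm_num at h

lemma cyc_diag {B : Mat3} (h : IsCyclic3 B) (a : Fin 3) : B a a = 0 := by
  have hz : cyclicPattern a a = 0 := by
    rcases fin3cases a with h|h|h <;> subst h <;> rfl
  rcases h with h|h <;> have := h a a <;> rw [hz] at this <;>
    [skip; rw [neg_zero] at this] <;> exact Real.sign_eq_zero_iff.1 this

lemma cyc_next {B : Mat3} (h : IsCyclic3 B) {a b c : Fin 3} (hab : a ≠ b) (hbc : b ≠ c)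
    (hac : a ≠ c) (hneg : Real.sign (B a b) = -1) :
    Real.sign (B b c) = -1 ∧ Real.sign (B b a) = 1 := by
  rcases h with h|h <;>
  · have h1 := h a b; have h2 := h b c; have h3 := h b a
    rw [hneg] at h1
    rcases fin3cases a with ha|ha|ha <;> rcases fin3cases b with hb|hb|hb <;>
      rcases fin3cases c with hc|hc|hc <;> subst ha <;> subst hb <;> subst hc <;>
      norm_num [cyclicPattern, Matrix.cons_val_two, Matrix.vecHead, Matrix.vecTail] at h1 <;> simp [cyclicPattern, Matrix.cons_val_two, Matrix.vecHead, Matrix.vecTail] at h2 h3 hab hbc hac ⊢ <;> exact ⟨h2, h3⟩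

lemma Msq {Bw : Mat3} (j : Fin 3) (hjj : Bw j j = 0) :
    (Jmat j + rowSel j (pPart Bw)) * (Jmat j + rowSel j (pPart Bw)) = 1 := by
  ext a b
  rcases fin3cases j with hj|hj|hj <;> rcases fin3cases a with ha|ha|ha <;>
    rcases fin3cases b with hb|hb|hb <;> subst hj <;> subst ha <;> subst hb <;>
    simp [Matrix.mul_apply, Fin.sum_univ_three, Jmat, rowSel, pPart, Matrix.diagonal,
      Matrix.one_apply, hjj]

lemma CGmat_append (B : Mat3) (w : List (Fin 3)) (s : Fin 3) :
    CGmat B (w ++ [s]) = CGstep B (CGmat B w) s := by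
  simp [CGmat, List.foldl_append]

lemma colSel_pPart_neg_zero {C : Mat3} {j : Fin 3} (h : ∀ a, 0 ≤ C a j) :
    colSel j (pPart (-C)) = 0 := by
  ext a b
  simp only [colSel, pPart, Matrix.of_apply, Matrix.neg_apply, Matrix.zero_apply]
  split
  · next hb => subst hb; simp [max_eq_right (neg_nonpos.2 (h a))]
  · rfl

lemma Cmat_step {B : Mat3} {w : List (Fin 3)} {s : Fin 3}
    (hcol : ∀ a, 0 ≤ Cmat B w a s) :
    Cmat B (w ++ [s]) = Cmat B w * (Jmat s + rowSel s (pPart (Bmat B w))) := by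
  rw [Cmat, CGmat_append]
  simp only [CGstep]
  rw [show (CGmat B w).2.1 = Cmat B w from rfl, show (CGmat B w).1 = Bmat B w from rfl,
    colSel_pPart_neg_zero hcol]
  simp [mul_add]

lemma Bmat_append (B : Mat3) (w : List (Fin 3)) (s : Fin 3) :
    Bmat B (w ++ [s]) = mutB s (Bmat B w) := by
  rw [Bmat, CGmat_append]; rfl

lemma colM_self {C Bw : Mat3} {s : Fin 3} (hss : Bw s s = 0) (a : Fin 3) :
    (C * (Jmat s + rowSel s (pPart Bw))) a s = - C a s := by
  rcases fin3cases s with hs|hs|hs <;> rcases fin3cases a with ha|ha|ha <;>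
    subst hs <;> subst ha <;>
    simp [Matrix.mul_apply, Fin.sum_univ_three, Jmat, rowSel, pPart, Matrix.diagonal, hss]

lemma colM_other {C Bw : Mat3} {s l : Fin 3} (hl : l ≠ s) (a : Fin 3) :
    (C * (Jmat s + rowSel s (pPart Bw))) a l = C a l + max (Bw s l) 0 * C a s := by
  rcases fin3cases s with hs|hs|hs <;> rcases fin3cases l with hl'|hl'|hl' <;>
    rcases fin3cases a with ha|ha|ha <;> subst hs <;> subst hl' <;> subst ha <;>
    simp_all [Matrix.mul_apply, Fin.sum_univ_three, Jmat, rowSel, pPart, Matrix.diagonal] <;> ring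

lemma mutB_row {Bw : Mat3} {s l : Fin 3} (hss : Bw s s = 0) (hl : l ≠ s) :
    mutB s Bw s l = - Bw s l := by
  rcases fin3cases s with hs|hs|hs <;> rcases fin3cases l with hl'|hl'|hl' <;>
    subst hs <;> subst hl' <;>
    simp_all [mutB, Matrix.mul_apply, Fin.sum_univ_three, Jmat, rowSel, colSel, pPart,
      Matrix.diagonal] <;> ring

lemma Cmat_single (B : Mat3) (i : Fin 3) :
    Cmat B [i] = Jmat i + rowSel i (pPart B) := by
  have h1 : ([i] : List (Fin 3)) = [] ++ [i] := rfl
  rw [h1, Cmat, CGmat_append]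
  simp only [CGstep]
  have hC : (CGmat B []).2.1 = (1 : Mat3) := rfl
  have hBe : (CGmat B []).1 = B := rfl
  rw [hC, hBe]
  have : colSel i (pPart (-(1:Mat3))) = 0 := by
    apply colSel_pPart_neg_zero
    intro a; by_cases h : a = i <;> simp [Matrix.one_apply, h]
  rw [this]
  simp

lemma col_ne_zero {C D : Mat3} (h : D * C = 1) (l : Fin 3) : ∃ a, C a l ≠ 0 := by
  by_contra hc
  push_neg at hc
  have h1 : (D * C) l l = 1 := by rw [h]; simp [Matrix.one_apply]
  rw [Matrix.mul_apply] at h1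
  simp [hc] at h1

lemma eps_pm {B : Mat3} {ε : List (Fin 3) → Fin 3 → ℝ} (hε : IsTropSigns B ε)
    {w : List (Fin 3)} (hw : ReducedSeq w) {l : Fin 3} {a : Fin 3}
    (hpos : 0 < Cmat B w a l) : ε w l = 1 := by
  obtain ⟨hpm, hcoh⟩ := hε w hw l
  rcases hpm with h|h
  · exact h
  · exfalso; have := hcoh a; rw [h] at this; nlinarith

lemma eps_pm' {B : Mat3} {ε : List (Fin 3) → Fin 3 → ℝ} (hε : IsTropSigns B ε)
    {w : List (Fin 3)} (hw : ReducedSeq w) {l : Fin 3} {a : Fin 3}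
    (hneg : Cmat B w a l < 0) : ε w l = -1 := by
  obtain ⟨hpm, hcoh⟩ := hε w hw l
  rcases hpm with h|h
  · exfalso; have := hcoh a; rw [h] at this; nlinarith
  · exact h

lemma reduced_append {w : List (Fin 3)} {s : Fin 3} (hne : w ≠ [])
    (hw : ReducedSeq w) (h : w.getLast hne ≠ s) : ReducedSeq (w ++ [s]) := by
  rw [ReducedSeq, List.Chain', List.isChain_append]
  refine ⟨hw, by simp, ?_⟩
  intro x hx y hy
  rw [List.getLast?_eq_getLast hne] at hx
  simp at hx hy; subst hx; subst hy; exact h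

lemma getLast_app {w : List (Fin 3)} {s : Fin 3} :
    (w ++ [s]).getLast (by simp) = s := by simp [List.getLast_append]

lemma trunk_step (B : Mat3) (hB : ClusterCyclic B)
    (ε : List (Fin 3) → Fin 3 → ℝ) (hε : IsTropSigns B ε)
    (K S T : List (Fin 3) → Fin 3)
    (hK : ∀ (w : List (Fin 3)) (hne : w ≠ []), ReducedSeq w → K w = w.getLast hne)
    (hS : ∀ w : List (Fin 3), w ≠ [] → ReducedSeq w →
      S w ≠ K w ∧ ε w (S w) * Real.sign (Bmat B w (K w) (S w)) = -1 ∧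
        ε w (K w) ≠ ε w (S w))
    (hT : ∀ w : List (Fin 3), w ≠ [] → ReducedSeq w → T w ≠ K w ∧ T w ≠ S w)
    (w : List (Fin 3)) (hw : ReducedSeq w) (hne : w ≠ [])
    (k s t : Fin 3) (hks : k ≠ s) (hkt : k ≠ t) (hst : s ≠ t)
    (hlast : w.getLast hne = k)
    (hKw : K w = k) (hSw : S w = s) (hTw : T w = t)
    (hek : ε w k = -1) (hes : ε w s = 1) (het : ε w t = 1)
    (D : Mat3) (hD : D * Cmat B w = 1) :
    ReducedSeq (w ++ [s]) ∧ K (w ++ [s]) = s ∧ S (w ++ [s]) = k ∧ T (w ++ [s]) = t ∧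
    ε (w ++ [s]) s = -1 ∧ ε (w ++ [s]) k = 1 ∧ ε (w ++ [s]) t = 1 ∧
    ∃ D', D' * Cmat B (w ++ [s]) = 1 := by
  have hw' : ReducedSeq (w ++ [s]) := reduced_append hne hw (by rw [hlast]; exact hks)
  have hne' : w ++ [s] ≠ [] := by simp
  have hcyc := hB w hw
  obtain ⟨hSK, hprod, hepsne⟩ := hS w hne hw
  rw [hKw, hSw, hes, one_mul] at hprod
  obtain ⟨hsgn_st, hsgn_sk⟩ := cyc_next hcyc hks hst hkt hprod
  have hBst : Bmat B w s t < 0 := sign_neg_one hsgn_st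
  have hss : Bmat B w s s = 0 := cyc_diag hcyc s
  have hcol : ∀ a, 0 ≤ Cmat B w a s := by
    intro a
    have := (hε w hw s).2 a
    rwa [hes, one_mul] at this
  have hC' : Cmat B (w ++ [s]) = Cmat B w * (Jmat s + rowSel s (pPart (Bmat B w))) :=
    Cmat_step hcol
  have hM : (Jmat s + rowSel s (pPart (Bmat B w))) * (Jmat s + rowSel s (pPart (Bmat B w))) = 1 :=
    Msq s hss
  have hD' : ((Jmat s + rowSel s (pPart (Bmat B w))) * D) * Cmat B (w ++ [s]) = 1 := by
    rw [hC', Matrix.mul_assoc, ← Matrix.mul_assoc D, hD, Matrix.one_mul, hM]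
  obtain ⟨a, has⟩ := col_ne_zero hD s
  have hCas : 0 < Cmat B w a s := lt_of_le_of_ne (hcol a) (Ne.symm has)
  have hC's : Cmat B (w ++ [s]) a s = - Cmat B w a s := by
    rw [hC']; exact colM_self hss a
  have heps's : ε (w ++ [s]) s = -1 := eps_pm' hε hw' (by rw [hC's]; linarith)
  obtain ⟨b, hbt⟩ := col_ne_zero hD t
  have hCbt : 0 < Cmat B w b t := by
    have := (hε w hw t).2 b
    rw [het, one_mul] at this
    exact lt_of_le_of_ne this (Ne.symm hbt)
  have hC't : Cmat B (w ++ [s]) b t = Cmat B w b t := by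
    rw [hC', colM_other hst.symm, max_eq_right hBst.le, zero_mul, add_zero]
  have heps't : ε (w ++ [s]) t = 1 := eps_pm hε hw' (by rw [hC't]; exact hCbt)
  have hK' : K (w ++ [s]) = s := by rw [hK (w ++ [s]) hne' hw', getLast_app]
  have hB'st : 0 < Bmat B (w ++ [s]) s t := by
    rw [Bmat_append, mutB_row hss hst.symm]; linarith
  obtain ⟨hSK', hprod', hepsne'⟩ := hS (w ++ [s]) hne' hw'
  rw [hK'] at hSK' hprod' hepsne'
  have hepsS' : ε (w ++ [s]) (S (w ++ [s])) = 1 := by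
    rcases (hε (w ++ [s]) hw' (S (w ++ [s]))).1 with h|h
    · exact h
    · exfalso; rw [heps's, h] at hepsne'; exact hepsne' rfl
  have hS'nt : S (w ++ [s]) ≠ t := by
    intro h
    rw [h, heps't, one_mul, Real.sign_of_pos hB'st] at hprod'
    norm_num at hprod'
  have hS'k : S (w ++ [s]) = k :=
    fin3_third (k := t) (s := s) (t := k) hst.symm hkt.symm hks.symm hSK' hS'nt
  have heps'k : ε (w ++ [s]) k = 1 := by rw [← hS'k]; exact hepsS'
  obtain ⟨hT1, hT2⟩ := hT (w ++ [s]) hne' hw'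
  rw [hK'] at hT1; rw [hS'k] at hT2
  have hT' : T (w ++ [s]) = t := fin3_third hks hkt hst hT1 hT2
  exact ⟨hw', hK', hS'k, hT', heps's, heps'k, heps't, _, hD'⟩

end TrunkHelpers

theorem tropical_signs_on_trunk (B : Mat3) (hB : ClusterCyclic B)
    (ε : List (Fin 3) → Fin 3 → ℝ) (hε : IsTropSigns B ε)
    (K S T : List (Fin 3) → Fin 3)
    (hK : ∀ (w : List (Fin 3)) (hne : w ≠ []), ReducedSeq w → K w = w.getLast hne)
    (hS : ∀ w : List (Fin 3), w ≠ [] → ReducedSeq w →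
      S w ≠ K w ∧ ε w (S w) * Real.sign (Bmat B w (K w) (S w)) = -1 ∧
        ε w (K w) ≠ ε w (S w))
    (hT : ∀ w : List (Fin 3), w ≠ [] → ReducedSeq w → T w ≠ K w ∧ T w ≠ S w)
    (i : Fin 3) (wseq : ℕ → List (Fin 3))
    (hw0 : wseq 0 = [i])
    (hwsucc : ∀ n, wseq (n + 1) = wseq n ++ [S (wseq n)]) :
    ∀ n : ℕ,
      ε (wseq n) i = (-1 : ℝ) ^ (n + 1) ∧
      ε (wseq n) (S [i]) = (-1 : ℝ) ^ n ∧
      ε (wseq n) (T [i]) = 1 ∧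
      (Even n → K (wseq n) = i ∧ S (wseq n) = S [i]) ∧
      (¬ Even n → K (wseq n) = S [i] ∧ S (wseq n) = i) ∧
      T (wseq n) = T [i] := by
    -- basic facts about the base word [i]
  have hred1 : ReducedSeq [i] := by simp [ReducedSeq, List.Chain']
  have hne1 : ([i] : List (Fin 3)) ≠ [] := by simp
  have hredE : ReducedSeq ([] : List (Fin 3)) := by simp [ReducedSeq, List.Chain']
  have hKi : K [i] = i := by rw [hK [i] hne1 hred1]; rfl
  have hBii : B i i = 0 := cyc_diag (hB [] hredE) i
  have hC1 : Cmat B [i] = Jmat i + rowSel i (pPart B) := Cmat_single B i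
  have hD1 : (Jmat i + rowSel i (pPart B)) * Cmat B [i] = 1 := by
    rw [hC1]; exact Msq i hBii
  have hentry : ∀ l : Fin 3, l ≠ i → Cmat B [i] l l = 1 := by
    intro l hl
    rw [hC1]
    rcases fin3cases i with h|h|h <;> rcases fin3cases l with h'|h'|h' <;> subst h <;> subst h' <;>
      simp_all [Jmat, rowSel, pPart, Matrix.diagonal]
  have hentryi : Cmat B [i] i i = -1 := by
    rw [hC1]
    rcases fin3cases i with h|h|h <;> subst h <;>
      simp_all [Jmat, rowSel, pPart, Matrix.diagonal]
  have hepsi : ε [i] i = -1 := eps_pm' hε hred1 (by rw [hentryi]; norm_num)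
  set s0 := S [i] with hs0def
  set t0 := T [i] with ht0def
  obtain ⟨hs0i, -, -⟩ := hS [i] hne1 hred1
  rw [hKi] at hs0i
  obtain ⟨ht0i, ht0s0⟩ := hT [i] hne1 hred1
  rw [hKi] at ht0i
  have hepss0 : ε [i] s0 = 1 := eps_pm hε hred1 (by rw [hentry s0 hs0i]; norm_num)
  have hepst0 : ε [i] t0 = 1 := eps_pm hε hred1 (by rw [hentry t0 ht0i]; norm_num)
  -- the inductive invariant
  have main : ∀ n : ℕ,
      ReducedSeq (wseq n) ∧ wseq n ≠ [] ∧
      K (wseq n) = (if Even n then i else s0) ∧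
      S (wseq n) = (if Even n then s0 else i) ∧
      T (wseq n) = t0 ∧
      ε (wseq n) (if Even n then i else s0) = -1 ∧
      ε (wseq n) (if Even n then s0 else i) = 1 ∧
      ε (wseq n) t0 = 1 ∧
      ∃ D, D * Cmat B (wseq n) = 1 := by
    intro n
    induction n with
    | zero =>
      rw [hw0]
      simp only [if_pos (Even.zero : Even (0:ℕ))]
      exact ⟨hred1, hne1, hKi, by trivial, by trivial, hepsi, hepss0, hepst0, _, hD1⟩
    | succ n ih =>
      obtain ⟨hw, hne, hKn, hSn, hTn, hek, hes, het, D, hD'⟩ := ih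
      have hlast : (wseq n).getLast hne = (if Even n then i else s0) := by
        rw [← hKn, hK (wseq n) hne hw]
      have hwsucc' : wseq (n + 1) = wseq n ++ [if Even n then s0 else i] := by
        rw [hwsucc n, hSn]
      by_cases hpar : Even n
      · simp only [hpar, if_true] at hKn hSn hek hes hlast hwsucc' ⊢
        obtain ⟨a1, a2, a3, a4, a5, a6, a7, a8⟩ :=
          trunk_step B hB ε hε K S T hK hS hT (wseq n) hw hne i s0 t0
            hs0i.symm ht0i.symm (fun h => ht0s0 h.symm) hlast hKn hSn hTn hek hes het D hD'
        rw [← hwsucc'] at a1 a2 a3 a4 a5 a6 a7 a8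
        have hpar' : ¬ Even (n + 1) := by simp [Nat.even_add_one, hpar]
        simp only [hpar', if_false]
        exact ⟨a1, by rw [hwsucc']; simp, a2, a3, a4, a5, a6, a7, a8⟩
      · simp only [hpar, if_false] at hKn hSn hek hes hlast hwsucc' ⊢
        obtain ⟨a1, a2, a3, a4, a5, a6, a7, a8⟩ :=
          trunk_step B hB ε hε K S T hK hS hT (wseq n) hw hne s0 i t0
            hs0i (fun h => ht0s0 h.symm) ht0i.symm hlast hKn hSn hTn hek hes het D hD'
        rw [← hwsucc'] at a1 a2 a3 a4 a5 a6 a7 a8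
        have hpar' : Even (n + 1) := by simp [Nat.even_add_one, hpar]
        simp only [hpar', if_true]
        exact ⟨a1, by rw [hwsucc']; simp, a2, a3, a4, a5, a6, a7, a8⟩
  intro n
  obtain ⟨-, -, hKn, hSn, hTn, hek, hes, het, -⟩ := main n
  by_cases hpar : Even n
  · simp only [hpar, if_true] at hKn hSn hek hes
    have h1 : ((-1 : ℝ)) ^ (n + 1) = -1 := Odd.neg_one_pow (hpar.add_one)
    have h2 : ((-1 : ℝ)) ^ n = 1 := hpar.neg_one_pow
    refine ⟨by rw [h1]; exact hek, by rw [h2]; exact hes, het, fun _ => ⟨hKn, hSn⟩,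
      fun h => absurd hpar h, hTn⟩
  · simp only [hpar, if_false] at hKn hSn hek hes
    have hodd : Odd n := Nat.not_even_iff_odd.1 hpar
    have h1 : ((-1 : ℝ)) ^ (n + 1) = 1 := (hodd.add_one).neg_one_pow
    have h2 : ((-1 : ℝ)) ^ n = -1 := hodd.neg_one_pow
    refine ⟨by rw [h1]; exact hes, by rw [h2]; exact hek, het, fun h => absurd h hpar,
      fun _ => ⟨hKn, hSn⟩, hTn⟩
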